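/- For every integer k ≥ 1, m_{k+1} ≤ (1 − β_k)·m_k + β_k·q_k² + (2/β_k)·‖z_{k+1} − z_k‖². -/

import Mathlib

theorem stmt_9 {E : Type*} [NormedAddCommGroup E] [NormedSpace ℝ E]
    (β : ℕ → ℝ) (hβ0 : β 0 = 1) (hβ : ∀ k, 0 < β k ∧ β k ≤ 1)
    (z yhat : ℕ → E)
    (hyhat : ∀ t : ℕ, yhat (t + 1) = (1 - 1 / β t) • z t + (1 / β t) • z (t + 1))
    (ζ : ℕ → ℕ → ℝ)
    (hζ : ∀ t k : ℕ, t ≤ k → ζ t k = β t * ∏ i ∈ Finset.Icc (t + 1) k, (1 - β i))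
    (q m : ℕ → ℝ)
    (hq : ∀ k : ℕ, q (k + 1) = ∑ t ∈ Finset.range (k + 1), ζ t k * ‖z (k + 1) - yhat (t + 1)‖)
    (hm : ∀ k : ℕ, m (k + 1) = ∑ t ∈ Finset.range (k + 1), ζ t k * ‖z (k + 1) - yhat (t + 1)‖ ^ 2) :
    ∀ k : ℕ, 1 ≤ k →
      m (k + 1) ≤ (1 - β k) * m k + β k * q k ^ 2 + (2 / β k) * ‖z (k + 1) - z k‖ ^ 2 := by
  intro k hk
  obtain ⟨j, rfl⟩ : ∃ j, k = j + 1 := ⟨k - 1, by omega⟩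
  have h2 : j + 1 + 1 = j + 2 := rfl
  rw [h2]
  set b := β (j + 1) with hbdef
  have hb0 : 0 < b := (hβ (j + 1)).1
  have hb1 : b ≤ 1 := (hβ (j + 1)).2
  set d := ‖z (j + 2) - z (j + 1)‖ with hddef
  have hd0 : 0 ≤ d := norm_nonneg _
  -- nonnegativity of ζ
  have hζnn : ∀ t n : ℕ, t ≤ n → 0 ≤ ζ t n := by
    intro t n h
    rw [hζ t n h]
    exact mul_nonneg (hβ t).1.le
      (Finset.prod_nonneg fun i _ => by linarith [(hβ i).2])
  -- recursion for ζ
  have hζrec : ∀ t, t ≤ j → ζ t (j + 1) = ζ t j * (1 - b) := by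
    intro t ht
    rw [hζ t (j + 1) (by omega), hζ t j ht,
      Finset.prod_Icc_succ_top (by omega : t + 1 ≤ j + 1)]
    ring
  have hζtop : ζ (j + 1) (j + 1) = b := by
    rw [hζ _ _ le_rfl, Finset.Icc_eq_empty (by omega), Finset.prod_empty, mul_one]
  -- telescoping: sum of weights is 1
  have hsum1 : ∑ t ∈ Finset.range (j + 1), ζ t j = 1 := by
    have h1 : ∀ t ∈ Finset.range (j + 1), ζ t j =
        (∏ i ∈ Finset.Icc (t + 1) j, (1 - β i)) - (∏ i ∈ Finset.Icc t j, (1 - β i)) := by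
      intro t ht
      rw [Finset.mem_range] at ht
      have hle : t ≤ j := by omega
      rw [hζ t j hle]
      have hins : (∏ i ∈ Finset.Icc t j, (1 - β i))
          = (1 - β t) * ∏ i ∈ Finset.Icc (t + 1) j, (1 - β i) := by
        rw [Finset.Icc_add_one_left_eq_Ioc, ← Finset.Ioc_insert_left hle,
          Finset.prod_insert (by simp)]
      rw [hins]; ring
    rw [Finset.sum_congr rfl h1,
      Finset.sum_range_sub (fun t => ∏ i ∈ Finset.Icc t j, (1 - β i))]
    have hempty : (∏ i ∈ Finset.Icc (j + 1) j, (1 - β i)) = 1 := by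
      rw [Finset.Icc_eq_empty (by omega), Finset.prod_empty]
    have hzero : (∏ i ∈ Finset.Icc 0 j, (1 - β i)) = 0 :=
      Finset.prod_eq_zero (Finset.mem_Icc.mpr ⟨le_rfl, Nat.zero_le j⟩) (by rw [hβ0]; ring)
    rw [hempty, hzero]; ring
  -- the last extrapolated term
  have hlast : ‖z (j + 2) - yhat (j + 2)‖ = (1 - b) / b * d := by
    rw [hyhat (j + 1)]
    have hdiff : z (j + 2) - ((1 - 1 / b) • z (j + 1) + (1 / b) • z (j + 2))
        = (1 - 1 / b) • (z (j + 2) - z (j + 1)) := by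
      module
    rw [hdiff, norm_smul, Real.norm_eq_abs]
    have h1b : 1 ≤ 1 / b := by
      rw [le_div_iff₀ hb0]; linarith
    rw [abs_of_nonpos (by linarith), hddef]
    congr 1
    field_simp
    ring
  -- triangle inequality
  have htri : ∀ t : ℕ, ‖z (j + 2) - yhat (t + 1)‖ ≤ ‖z (j + 1) - yhat (t + 1)‖ + d := by
    intro t
    have h : z (j + 2) - yhat (t + 1) = (z (j + 1) - yhat (t + 1)) + (z (j + 2) - z (j + 1)) := by
      abel
    rw [h, hddef]
    exact norm_add_le _ _
  have hq0 : 0 ≤ q (j + 1) := by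
    rw [hq j]
    exact Finset.sum_nonneg fun t ht =>
      mul_nonneg (hζnn t j (by exact Nat.lt_succ_iff.mp (Finset.mem_range.mp ht)))
        (norm_nonneg _)
  -- split the sum
  rw [hm (j + 1)]
  rw [show j + 1 + 1 = j + 2 from rfl, Finset.sum_range_succ, h2]
  -- bound the main part
  have hA : ∑ t ∈ Finset.range (j + 1), ζ t (j + 1) * ‖z (j + 2) - yhat (t + 1)‖ ^ 2
      ≤ (1 - b) * (m (j + 1) + 2 * d * q (j + 1) + d ^ 2) := by
    have step1 : ∀ t ∈ Finset.range (j + 1),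
        ζ t (j + 1) * ‖z (j + 2) - yhat (t + 1)‖ ^ 2
        ≤ (1 - b) * (ζ t j * (‖z (j + 1) - yhat (t + 1)‖ ^ 2
            + 2 * d * ‖z (j + 1) - yhat (t + 1)‖ + d ^ 2)) := by
      intro t ht
      rw [Finset.mem_range] at ht
      have htj : t ≤ j := by omega
      rw [hζrec t htj]
      have h1 : ‖z (j + 2) - yhat (t + 1)‖ ^ 2 ≤ (‖z (j + 1) - yhat (t + 1)‖ + d) ^ 2 := by
        have := htri t
        nlinarith [norm_nonneg (z (j + 2) - yhat (t + 1)),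
          norm_nonneg (z (j + 1) - yhat (t + 1))]
      have hnn : 0 ≤ ζ t j * (1 - b) :=
        mul_nonneg (hζnn t j htj) (by linarith)
      calc ζ t j * (1 - b) * ‖z (j + 2) - yhat (t + 1)‖ ^ 2
          ≤ ζ t j * (1 - b) * (‖z (j + 1) - yhat (t + 1)‖ + d) ^ 2 :=
            mul_le_mul_of_nonneg_left h1 hnn
        _ = (1 - b) * (ζ t j * (‖z (j + 1) - yhat (t + 1)‖ ^ 2
            + 2 * d * ‖z (j + 1) - yhat (t + 1)‖ + d ^ 2)) := by ring
    calc ∑ t ∈ Finset.range (j + 1), ζ t (j + 1) * ‖z (j + 2) - yhat (t + 1)‖ ^ 2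
        ≤ ∑ t ∈ Finset.range (j + 1), (1 - b) * (ζ t j * (‖z (j + 1) - yhat (t + 1)‖ ^ 2
            + 2 * d * ‖z (j + 1) - yhat (t + 1)‖ + d ^ 2)) := Finset.sum_le_sum step1
      _ = (1 - b) * ((∑ t ∈ Finset.range (j + 1), ζ t j * ‖z (j + 1) - yhat (t + 1)‖ ^ 2)
            + 2 * d * (∑ t ∈ Finset.range (j + 1), ζ t j * ‖z (j + 1) - yhat (t + 1)‖)
            + d ^ 2 * (∑ t ∈ Finset.range (j + 1), ζ t j)) := by
          simp only [Finset.mul_sum]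
          rw [← Finset.sum_add_distrib, ← Finset.sum_add_distrib, Finset.mul_sum]
          exact Finset.sum_congr rfl fun t _ => by ring
      _ = (1 - b) * (m (j + 1) + 2 * d * q (j + 1) + d ^ 2) := by
          rw [hsum1, ← hm j, ← hq j]; ring
  -- the last term
  have hB : ζ (j + 1) (j + 1) * ‖z (j + 2) - yhat (j + 2)‖ ^ 2 = (1 - b) ^ 2 * d ^ 2 / b := by
    rw [hζtop, hlast]
    field_simp
  -- final algebraic inequality
  have key : (1 - b) * (m (j + 1) + 2 * d * q (j + 1) + d ^ 2) + (1 - b) ^ 2 * d ^ 2 / b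
      ≤ (1 - b) * m (j + 1) + b * q (j + 1) ^ 2 + 2 / b * d ^ 2 := by
    rw [← sub_nonneg]
    have hrw : (1 - b) * m (j + 1) + b * q (j + 1) ^ 2 + 2 / b * d ^ 2
        - ((1 - b) * (m (j + 1) + 2 * d * q (j + 1) + d ^ 2) + (1 - b) ^ 2 * d ^ 2 / b)
        = ((b * q (j + 1) - (1 - b) * d) ^ 2 + b * (3 - b) * d ^ 2) / b := by
      field_simp
      ring
    rw [hrw]
    apply div_nonneg _ hb0.le
    have h3 : 0 ≤ b * (3 - b) * d ^ 2 :=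
      mul_nonneg (mul_nonneg hb0.le (by linarith)) (sq_nonneg d)
    nlinarith [sq_nonneg (b * q (j + 1) - (1 - b) * d)]
  linarith [hA, hB.le, hB.ge]
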